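/- arXiv:2212.04880 — 2 statements merged into one kernel-verified Lean document; each statement's English description precedes it below -/
import Mathlib

section
/- Every chordal graph on n vertices has at most n maximal cliques. -/
open SimpleGraph

attribute [local instance] Classical.propDecidable
set_option linter.unusedSectionVars false

variable {V : Type*} [Fintype V] [DecidableEq V]

/-- A graph is chordal if it has no induced cycle of length at least 4. -/
def IsChordal (G : SimpleGraph V) : Prop :=
  ∀ n : ℕ, 4 ≤ n →
    ¬ ∃ f : Fin n ↪ V, ∀ i j, (cycleGraph n).Adj i j ↔ G.Adj (f i) (f j)

/-- `K` is a maximal clique of `G`. -/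
def MaxClique (G : SimpleGraph V) (K : Finset V) : Prop :=
  G.IsClique (K : Set V) ∧ ∀ K' : Finset V, G.IsClique (K' : Set V) → K ⊆ K' → K = K'

/-- The type of maximal cliques of `G`. -/
abbrev CV (G : SimpleGraph V) := {K : Finset V // MaxClique G K}

/-- `S` is a `u`-`v` separator of `G`: `u, v ∉ S` and every `u`-`v` walk meets `S`. -/
def Separates (G : SimpleGraph V) (S : Finset V) (u v : V) : Prop :=
  u ∉ S ∧ v ∉ S ∧ ∀ p : G.Walk u v, ∃ x ∈ p.support, x ∈ S

lemma Separates.symm' {G : SimpleGraph V} {S : Finset V} {u v : V}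
    (h : Separates G S u v) : Separates G S v u := by
  obtain ⟨hu, hv, h⟩ := h
  refine ⟨hv, hu, fun p => ?_⟩
  obtain ⟨x, hx, hxS⟩ := h p.reverse
  refine ⟨x, ?_, hxS⟩
  simpa using hx

/-- `S` is a minimal `u`-`v` separator of `G`. -/
def MinSeparates (G : SimpleGraph V) (S : Finset V) (u v : V) : Prop :=
  Separates G S u v ∧ ∀ S' : Finset V, S' ⊂ S → ¬ Separates G S' u v

lemma MinSeparates.symm' {G : SimpleGraph V} {S : Finset V} {u v : V}
    (h : MinSeparates G S u v) : MinSeparates G S v u :=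
  ⟨h.1.symm', fun S' hS' hc => h.2 S' hS' hc.symm'⟩

/-- The clique graph `C(G)` of `G`: vertices are the maximal cliques; `K` and `K'` are
adjacent iff `K ∩ K'` is a minimal `u`-`v` separator for all `u ∈ K \ K'`, `v ∈ K' \ K`. -/
def cliqueGraph (G : SimpleGraph V) : SimpleGraph (CV G) where
  Adj K K' := K ≠ K' ∧
    ∀ u ∈ K.1 \ K'.1, ∀ v ∈ K'.1 \ K.1, MinSeparates G (K.1 ∩ K'.1) u v
  symm := by
    constructor
    rintro K K' ⟨hne, h⟩
    refine ⟨hne.symm, fun u hu v hv => ?_⟩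
    rw [Finset.inter_comm]
    exact (h v hv u hu).symm'
  loopless := by constructor; rintro K ⟨hne, -⟩; exact hne rfl

/-- A clique tree of `G`: a tree on the maximal cliques of `G` such that for every vertex
`v`, the maximal cliques containing `v` induce a connected subgraph (a subtree). -/
def IsCliqueTree (G : SimpleGraph V) (T : SimpleGraph (CV G)) : Prop :=
  T.IsTree ∧ ∀ v : V, (T.induce {K : CV G | v ∈ K.1}).Connected

/-- `C(G) ⊖ S`: the clique graph with all edges labeled `S` deleted. -/
def deleteLabel (G : SimpleGraph V) (S : Finset V) : SimpleGraph (CV G) where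
  Adj K K' := (cliqueGraph G).Adj K K' ∧ K.1 ∩ K'.1 ≠ S
  symm := by
    constructor
    rintro K K' ⟨h, hS⟩
    exact ⟨h.symm, by rwa [Finset.inter_comm]⟩
  loopless := by constructor; rintro K ⟨h, -⟩; exact h.ne rfl

/-- `w` is the minimum edge weight of `C(G)` (weights are `|K ∩ K'|`). -/
def IsMinEdgeWeight (G : SimpleGraph V) (w : ℕ) : Prop :=
  (∃ K K' : CV G, (cliqueGraph G).Adj K K' ∧ (K.1 ∩ K'.1).card = w) ∧
    ∀ K K' : CV G, (cliqueGraph G).Adj K K' → w ≤ (K.1 ∩ K'.1).card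

/-- `C(G)` with all edges of (minimum) weight `w` deleted; its connected components are
the units. -/
def unitGraph (G : SimpleGraph V) (w : ℕ) : SimpleGraph (CV G) where
  Adj K K' := (cliqueGraph G).Adj K K' ∧ (K.1 ∩ K'.1).card ≠ w
  symm := by
    constructor
    rintro K K' ⟨h, hw⟩
    exact ⟨h.symm, by rwa [Finset.inter_comm]⟩
  loopless := by constructor; rintro K ⟨h, -⟩; exact h.ne rfl

/-- The type of units. -/
abbrev LUnit (G : SimpleGraph V) (w : ℕ) := (unitGraph G w).ConnectedComponent

/-- The unit containing a maximal clique `K`. -/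
def umk (G : SimpleGraph V) (w : ℕ) (K : CV G) : LUnit G w :=
  (unitGraph G w).connectedComponentMk K

/-- The layer structure: units are its vertices; two units are adjacent iff some
edge of `C(G)` crosses them. -/
def layerGraph (G : SimpleGraph V) (w : ℕ) : SimpleGraph (LUnit G w) where
  Adj U U' := U ≠ U' ∧ ∃ K K' : CV G,
    (cliqueGraph G).Adj K K' ∧ umk G w K = U ∧ umk G w K' = U'
  symm := by
    constructor
    rintro U U' ⟨hne, K, K', hadj, hK, hK'⟩
    exact ⟨hne.symm, K', K, hadj.symm, hK', hK⟩
  loopless := by constructor; rintro U ⟨hne, -⟩; exact hne rfl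

/-- All edges of `C(G)` crossing `U` and `U'` have the label `S`. -/
def CrossLabel (G : SimpleGraph V) (w : ℕ) (U U' : LUnit G w) (S : Finset V) : Prop :=
  ∀ K K' : CV G, (cliqueGraph G).Adj K K' → umk G w K = U → umk G w K' = U' →
    K.1 ∩ K'.1 = S

/-- `𝒱(U)`: the vertices of `G` contained in some maximal clique of the unit `U`. -/
def unitVerts (G : SimpleGraph V) (w : ℕ) (U : LUnit G w) : Set V :=
  {x | ∃ K : CV G, umk G w K = U ∧ x ∈ K.1}

/-- An MCS ordering of `G`: at each step, the visited vertex has the maximum number of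
already visited neighbors among unvisited vertices. -/
def IsMCSOrdering (G : SimpleGraph V) (σ : Fin (Fintype.card V) ≃ V) : Prop :=
  ∀ i j : Fin (Fintype.card V), i ≤ j →
    (Finset.univ.filter fun l => l < i ∧ G.Adj (σ l) (σ j)).card ≤
      (Finset.univ.filter fun l => l < i ∧ G.Adj (σ l) (σ i)).card

/-- A Prim ordering of `C(G)`: each vertex after the first is incident to an edge of
maximum weight among all edges between visited and unvisited vertices. -/
def IsPrimOrdering (G : SimpleGraph V) (π : Fin (Fintype.card (CV G)) ≃ CV G) : Prop :=
  ∀ i : Fin (Fintype.card (CV G)), 0 < (i : ℕ) →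
    ∃ j, j < i ∧ (cliqueGraph G).Adj (π j) (π i) ∧
      ∀ j' k, j' < i → i ≤ k → (cliqueGraph G).Adj (π j') (π k) →
        ((π j').1 ∩ (π k).1).card ≤ ((π j).1 ∩ (π i).1).card

/-- The position in `π` of the first maximal clique containing `x`. -/
noncomputable def firstIdx (G : SimpleGraph V)
    (π : Fin (Fintype.card (CV G)) ≃ CV G) (x : V) : ℕ :=
  sInf {j : ℕ | ∃ h : j < Fintype.card (CV G), x ∈ (π ⟨j, h⟩).1}

/-- `σ` is a generation of `π`. -/
def IsGeneration (G : SimpleGraph V) (π : Fin (Fintype.card (CV G)) ≃ CV G)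
    (σ : Fin (Fintype.card V) ≃ V) : Prop :=
  ∀ x y : V, firstIdx G π x < firstIdx G π y → σ.symm x < σ.symm y

/-- `σ` is a linear extension of the relation `R`. -/
def ExtendsR (R : V → V → Prop) (σ : Fin (Fintype.card V) ≃ V) : Prop :=
  ∀ x y : V, R x y → x ≠ y → σ.symm x < σ.symm y

/-- `π` respects `R`. -/
def RespectsR (G : SimpleGraph V) (R : V → V → Prop)
    (π : Fin (Fintype.card (CV G)) ≃ CV G) : Prop :=
  ∀ x y : V, R x y → x ≠ y → firstIdx G π x ≤ firstIdx G π y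

/-- The set of vertices of `G` contained in one of the first `i` cliques of `π`. -/
def primPrefixVerts (G : SimpleGraph V) (π : Fin (Fintype.card (CV G)) ≃ CV G)
    (i : ℕ) : Set V :=
  {x | ∃ j : Fin (Fintype.card (CV G)), (j : ℕ) < i ∧ x ∈ (π j).1}


set_option maxHeartbeats 1000000
set_option linter.unusedVariables false

section Aux
variable {G : SimpleGraph V}

/-- The restriction of `G` to a set of vertices (an induced subgraph on the same type). -/
def Grestrict (G : SimpleGraph V) (s : Set V) : SimpleGraph V where
  Adj u v := u ∈ s ∧ v ∈ s ∧ G.Adj u v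
  symm := ⟨fun u v ⟨hu, hv, h⟩ => ⟨hv, hu, h.symm⟩⟩
  loopless := ⟨fun u ⟨_, _, h⟩ => G.loopless.irrefl u h⟩

lemma Grestrict_adj {s : Set V} {u v : V} :
    (Grestrict G s).Adj u v ↔ u ∈ s ∧ v ∈ s ∧ G.Adj u v := Iff.rfl

lemma reachable_transfer {H1 H2 : SimpleGraph V} :
    ∀ {u v : V} (p : H1.Walk u v),
      (∀ a b, H1.Adj a b → a ∈ p.support → b ∈ p.support → H2.Adj a b) →
      H2.Reachable u v := by
  intro u v p
  induction p with
  | nil => exact fun _ => Reachable.refl _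
  | @cons a b c h q ih =>
    intro hyp
    have h1 : H2.Adj a b := by
      refine hyp a b h (Walk.start_mem_support _) ?_
      rw [Walk.support_cons]
      exact List.mem_cons_of_mem _ (Walk.start_mem_support _)
    refine h1.reachable.trans (ih fun x y hadj hx hy => ?_)
    refine hyp x y hadj ?_ ?_ <;> rw [Walk.support_cons] <;>
      [exact List.mem_cons_of_mem _ hx; exact List.mem_cons_of_mem _ hy]

lemma restrict_reachable_mem {t : Set V} {u v : V}
    (h : (Grestrict G t).Reachable u v) (hu : u ∈ t) : v ∈ t := by
  obtain ⟨p⟩ := h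
  induction p with
  | nil => exact hu
  | @cons a b c h q ih => exact ih h.2.1

/-- Build a walk from an adjacency chain list. -/
lemma walk_of_chain {H : SimpleGraph V} :
    ∀ (L : List V) {x y : V}, L.Chain' H.Adj → L.head? = some x → L.getLast? = some y →
      ∃ p : H.Walk x y, p.length + 1 = L.length := by
  intro L
  induction L with
  | nil => intro x y _ hh _; simp at hh
  | cons a t ih =>
    intro x y hc hh hl
    cases t with
    | nil =>
      simp at hh hl
      subst hh; subst hl
      exact ⟨Walk.nil, rfl⟩
    | cons b t2 =>
      simp only [List.Chain', List.isChain_cons_cons] at hc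
      have hh' : a = x := by simpa using hh
      subst hh'
      have hl' : (b :: t2).getLast? = some y := by
        rw [← hl, List.getLast?_cons_cons]
      obtain ⟨q, hq⟩ := ih hc.2 rfl hl'
      exact ⟨Walk.cons hc.1 q, by simp [hq]⟩

/-- In a chain of length ≥ 2, every element has a neighbor. -/
lemma chain'_exists_adj {H : SimpleGraph V} :
    ∀ (L : List V), L.Chain' H.Adj → 2 ≤ L.length → ∀ z ∈ L, ∃ w, H.Adj z w := by
  intro L
  induction L with
  | nil => intro _ h; simp at h
  | cons a t ih =>
    intro hc hlen z hz
    cases t with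
    | nil => simp at hlen
    | cons b t2 =>
      simp only [List.Chain', List.isChain_cons_cons] at hc
      rcases List.mem_cons.1 hz with rfl | hz'
      · exact ⟨b, hc.1⟩
      cases t2 with
      | nil =>
        simp at hz'
        subst hz'
        exact ⟨a, hc.1.symm⟩
      | cons c t3 => exact ih hc.2 (by simp) z hz'

/-- There is an induced (chordless) path between any two distinct reachable vertices. -/
lemma exists_induced_path {H : SimpleGraph V} {x y : V} (hr : H.Reachable x y) (hxy : x ≠ y) :
    ∃ L : List V, L.head? = some x ∧ L.getLast? = some y ∧ L.Chain' H.Adj ∧ L.Nodup ∧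
      2 ≤ L.length ∧ ∀ i j (hi : i < L.length) (hj : j < L.length), i + 1 < j →
        ¬ H.Adj L[i] L[j] := by
  classical
  set D : Set ℕ := {k | ∃ p : H.Walk x y, p.IsPath ∧ p.length = k} with hD
  have hDne : D.Nonempty := by
    obtain ⟨p⟩ := hr
    exact ⟨p.bypass.length, p.bypass, p.bypass_isPath, rfl⟩
  obtain ⟨p, hpath, hplen⟩ := Nat.sInf_mem hDne
  set L := p.support with hLdef
  have hchain : L.Chain' H.Adj := p.isChain_adj_support
  have hnodup : L.Nodup := hpath.support_nodup
  have hLlen : L.length = p.length + 1 := p.length_support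
  have hLne : L ≠ [] := p.support_ne_nil
  have hhead : L.head? = some x := by rw [hLdef, p.support_eq_cons]; rfl
  have hlast : L.getLast? = some y := by
    rw [List.getLast?_eq_getLast hLne]
    exact congrArg some p.getLast_support
  have hlen2 : 2 ≤ L.length := by
    rw [hLlen]
    have : 1 ≤ p.length := by
      cases p with
      | nil => exact absurd rfl hxy
      | cons h q => rw [Walk.length_cons]; omega
    omega
  refine ⟨L, hhead, hlast, hchain, hnodup, hlen2, ?_⟩
  intro i j hi hj hij hadj
  -- build a shorter walk using the chord
  set L' : List V := L.take (i+1) ++ L.drop j with hL'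
  have hlenT : (L.take (i+1)).length = i + 1 := by
    rw [List.length_take]; omega
  have hlenD : (L.drop j).length = L.length - j := List.length_drop
  have hlen' : L'.length = (i+1) + (L.length - j) := by
    rw [hL', List.length_append, hlenT, hlenD]
  have hchain' : L'.Chain' H.Adj := by
    rw [hL']; simp only [List.Chain']; rw [List.isChain_append]
    refine ⟨hchain.take _, hchain.drop _, ?_⟩
    intro a ha b hb
    have haa : a = L[i] := by
      rw [List.getLast?_eq_getElem?, hlenT] at ha
      simp only [List.getElem?_take, Nat.add_sub_cancel] at ha
      rw [if_pos (by omega), List.getElem?_eq_getElem hi] at ha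
      simpa using ha.symm
    have hbb : b = L[j] := by
      rw [List.head?_drop, List.getElem?_eq_getElem hj] at hb
      simpa using hb.symm
    rw [haa, hbb]; exact hadj
  have hhead' : L'.head? = some x := by
    rw [List.head?_eq_getElem?, hL', List.getElem?_append_left (by omega),
      List.getElem?_take, if_pos (by omega), ← List.head?_eq_getElem?, hhead]
  have hlast' : L'.getLast? = some y := by
    rw [List.getLast?_eq_getElem?, hL', List.length_append, hlenT, hlenD,
      List.getElem?_append_right (by rw [hlenT]; omega), hlenT]
    have : (i + 1 + (L.length - j) - 1 - (i+1)) = L.length - j - 1 := by omega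
    rw [this]
    simp only [List.getElem?_drop]
    have : j + (L.length - j - 1) = L.length - 1 := by omega
    rw [this, ← List.getLast?_eq_getElem?, hlast]
  obtain ⟨q, hq⟩ := walk_of_chain L' hchain' hhead' hlast'
  have : q.bypass.length ∈ D := ⟨q.bypass, q.bypass_isPath, rfl⟩
  have hle := Nat.sInf_le this
  have := q.length_bypass_le
  rw [← hplen] at hle
  omega
end Aux

section B
variable {G : SimpleGraph V}
variable {G : SimpleGraph V}

lemma chordal_no_cycle (hch : IsChordal G) {n : ℕ} (hn : 4 ≤ n)
    (f : Fin n → V) (hinj : Function.Injective f)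
    (hiff : ∀ i j : Fin n, G.Adj (f i) (f j) ↔
      ((j : ℕ) = ((i : ℕ) + 1) % n ∨ (i : ℕ) = ((j : ℕ) + 1) % n)) : False := by
  obtain ⟨m, rfl⟩ : ∃ m, n = m + 2 := ⟨n - 2, by omega⟩
  refine hch _ hn ⟨⟨f, hinj⟩, fun i j => ?_⟩
  have key : ∀ a b : Fin (m + 2), b - a = 1 ↔ (b : ℕ) = ((a : ℕ) + 1) % (m + 2) := by
    intro a b
    have hv : ((a + 1 : Fin (m + 2)) : ℕ) = ((a : ℕ) + 1) % (m + 2) := by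
      rw [Fin.add_def, Fin.val_one]
    constructor
    · intro h
      have hb : b = a + 1 := by rw [← h]; exact (add_sub_cancel a b).symm
      rw [hb, hv]
    · intro h
      have hb : b = a + 1 := Fin.ext (by rw [hv]; exact h)
      rw [hb]; exact add_sub_cancel_left a 1
  rw [cycleGraph_adj]
  simp only [Function.Embedding.coeFn_mk]
  rw [hiff i j, key i j, key j i]
  tauto

lemma clique_of_sep (hch : IsChordal G) {x y : V} (hxy : x ≠ y)
    {A B : Set V}
    (hAB : ∀ u ∈ A, ∀ v ∈ B, u ≠ v ∧ ¬ G.Adj u v)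
    (hxA : x ∉ A) (hyA : y ∉ A) (hxB : x ∉ B) (hyB : y ∉ B)
    (hrA : (Grestrict G ({x, y} ∪ A)).Reachable x y)
    (hrB : (Grestrict G ({x, y} ∪ B)).Reachable x y) :
    G.Adj x y := by
  by_contra hnadj
  set SA : Set V := {x, y} ∪ A with hSA
  set SB : Set V := {x, y} ∪ B with hSB
  set HA := Grestrict G SA with hHA
  set HB := Grestrict G SB with hHB
  have hxSA : x ∈ SA := Or.inl (Or.inl rfl)
  have hySA : y ∈ SA := Or.inl (Or.inr rfl)
  have hxSB : x ∈ SB := Or.inl (Or.inl rfl)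
  have hySB : y ∈ SB := Or.inl (Or.inr rfl)
  obtain ⟨LP, hPh, hPl, hPc, hPnd, hP2, hPind⟩ := exists_induced_path hrA hxy
  obtain ⟨LQ, hQh, hQl, hQc, hQnd, hQ2, hQind⟩ :=
    exists_induced_path hrB.symm hxy.symm
  set p := LP.length with hp
  set q := LQ.length with hq
  -- getElem basics
  have hP0 : ∀ (h : 0 < p), LP[0] = x := by
    intro h
    have := hPh
    rw [List.head?_eq_getElem?, List.getElem?_eq_getElem h] at this
    simpa using this
  have hPlast : ∀ (h : p - 1 < p), LP[p - 1] = y := by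
    intro h
    have := hPl
    rw [List.getLast?_eq_getElem?, List.getElem?_eq_getElem h] at this
    simpa using this
  have hQ0 : ∀ (h : 0 < q), LQ[0] = y := by
    intro h
    have := hQh
    rw [List.head?_eq_getElem?, List.getElem?_eq_getElem h] at this
    simpa using this
  have hQlast : ∀ (h : q - 1 < q), LQ[q - 1] = x := by
    intro h
    have := hQl
    rw [List.getLast?_eq_getElem?, List.getElem?_eq_getElem h] at this
    simpa using this
  -- chain in getElem form
  have cP : ∀ i (h : i + 1 < p), HA.Adj LP[i] LP[i + 1] := by
    intro i h
    have := List.isChain_iff_getElem.1 hPc i (by omega)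
    simpa [List.get_eq_getElem] using this
  have cQ : ∀ i (h : i + 1 < q), HB.Adj LQ[i] LQ[i + 1] := by
    intro i h
    have := List.isChain_iff_getElem.1 hQc i (by omega)
    simpa [List.get_eq_getElem] using this
  -- lengths at least 3
  have hP3 : 3 ≤ p := by
    by_contra hcon
    have h2 : p = 2 := by omega
    have := cP 0 (by omega)
    rw [hP0 (by omega)] at this
    have h1 : LP[1] = y := by
      have := hPlast (by omega)
      simpa [h2] using this
    rw [h1] at this
    exact hnadj (Grestrict_adj.1 this).2.2
  have hQ3 : 3 ≤ q := by
    by_contra hcon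
    have h2 : q = 2 := by omega
    have := cQ 0 (by omega)
    rw [hQ0 (by omega)] at this
    have h1 : LQ[1] = x := by
      have := hQlast (by omega)
      simpa [h2] using this
    rw [h1] at this
    exact hnadj (Grestrict_adj.1 this).2.2.symm
  -- membership
  have hPmem : ∀ i (h : i < p), LP[i] ∈ SA := by
    intro i h
    obtain ⟨w, hw⟩ := chain'_exists_adj LP hPc (by omega) LP[i] (List.getElem_mem h)
    exact (Grestrict_adj.1 hw).1
  have hQmem : ∀ i (h : i < q), LQ[i] ∈ SB := by
    intro i h
    obtain ⟨w, hw⟩ := chain'_exists_adj LQ hQc (by omega) LQ[i] (List.getElem_mem h)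
    exact (Grestrict_adj.1 hw).1
  have hPint : ∀ i (h : i < p), 0 < i → i < p - 1 → LP[i] ∈ A := by
    intro i h h0 h1
    rcases hPmem i h with (hx' | hy') | hA'
    · exfalso
      have : LP[i] = LP[0] := by rw [hP0 (by omega)]; exact hx'
      have := (hPnd.getElem_inj_iff).1 this
      omega
    · exfalso
      have : LP[i] = LP[p-1] := by rw [hPlast (by omega)]; exact hy'
      have := (hPnd.getElem_inj_iff).1 this
      omega
    · exact hA'
  have hQint : ∀ i (h : i < q), 0 < i → i < q - 1 → LQ[i] ∈ B := by
    intro i h h0 h1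
    rcases hQmem i h with (hx' | hy') | hB'
    · exfalso
      have : LQ[i] = LQ[q-1] := by rw [hQlast (by omega)]; exact hx'
      have := (hQnd.getElem_inj_iff).1 this
      omega
    · exfalso
      have : LQ[i] = LQ[0] := by rw [hQ0 (by omega)]; exact hy'
      have := (hQnd.getElem_inj_iff).1 this
      omega
    · exact hB'
  -- the cycle function
  set n := p + (q - 2) with hn
  have hn4 : 4 ≤ n := by omega
  set f : Fin n → V := fun i =>
    if h : (i : ℕ) < p then LP[(i : ℕ)]
    else LQ[(i : ℕ) - p + 1]'(by have := i.isLt; omega) with hf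
  have hfP : ∀ (i : Fin n) (h : (i : ℕ) < p), f i = LP[(i : ℕ)] := by
    intro i h; simp only [hf, dif_pos h]
  have hfQ : ∀ (i : Fin n) (h : ¬ (i : ℕ) < p),
      f i = LQ[(i : ℕ) - p + 1]'(by have := i.isLt; omega) := by
    intro i h; simp only [hf, dif_neg h]
  -- injectivity
  have hinj : Function.Injective f := by
    intro i j hij
    by_cases hi : (i : ℕ) < p <;> by_cases hj : (j : ℕ) < p
    · rw [hfP i hi, hfP j hj] at hij
      exact Fin.ext ((hPnd.getElem_inj_iff).1 hij)
    · exfalso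
      rw [hfP i hi, hfQ j hj] at hij
      have hjB : LQ[(j : ℕ) - p + 1]'(by have := j.isLt; omega) ∈ B := by
        apply hQint
        · omega
        · have := j.isLt; omega
      rcases hPmem (i : ℕ) hi with (hx' | hy') | hA'
      · rw [hij] at hx'; exact hxB (hx' ▸ hjB)
      · rw [hij] at hy'; exact hyB (hy' ▸ hjB)
      · exact (hAB _ hA' _ hjB).1 hij
    · exfalso
      rw [hfQ i hi, hfP j hj] at hij
      have hiB : LQ[(i : ℕ) - p + 1]'(by have := i.isLt; omega) ∈ B := by
        apply hQint
        · omega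
        · have := i.isLt; omega
      rcases hPmem (j : ℕ) hj with (hx' | hy') | hA'
      · rw [← hij] at hx'; exact hxB (hx' ▸ hiB)
      · rw [← hij] at hy'; exact hyB (hy' ▸ hiB)
      · exact (hAB _ hA' _ hiB).1 hij.symm
    · rw [hfQ i hi, hfQ j hj] at hij
      have := (hQnd.getElem_inj_iff).1 hij
      have hi' := i.isLt
      have hj' := j.isLt
      exact Fin.ext (by omega)
  have geP : ∀ (a b : ℕ) (ha : a < p) (hb : b < p), a = b → LP[a]'ha = LP[b]'hb := by
    intro a b ha hb h; subst h; rfl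
  have geQ : ∀ (a b : ℕ) (ha : a < q) (hb : b < q), a = b → LQ[a]'ha = LQ[b]'hb := by
    intro a b ha hb h; subst h; rfl
  -- adjacency conversions
  have hGA : ∀ u v, u ∈ SA → v ∈ SA → G.Adj u v → HA.Adj u v := by
    intro u v hu hv h; exact Grestrict_adj.2 ⟨hu, hv, h⟩
  have hGB : ∀ u v, u ∈ SB → v ∈ SB → G.Adj u v → HB.Adj u v := by
    intro u v hu hv h; exact Grestrict_adj.2 ⟨hu, hv, h⟩
  have hAG : ∀ u v, HA.Adj u v → G.Adj u v := fun u v h => (Grestrict_adj.1 h).2.2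
  have hBG : ∀ u v, HB.Adj u v → G.Adj u v := fun u v h => (Grestrict_adj.1 h).2.2
  -- consecutive adjacency
  have claim1 : ∀ (i : Fin n) (h : (i : ℕ) + 1 < n),
      G.Adj (f i) (f ⟨(i : ℕ) + 1, h⟩) := by
    intro i h
    by_cases h1 : (i : ℕ) + 1 < p
    · have ei : f i = LP[(i : ℕ)]'(by omega) := hfP i (by omega)
      have ej : f ⟨(i : ℕ) + 1, h⟩ = LP[(i : ℕ) + 1]'(by omega) :=
        hfP ⟨(i : ℕ) + 1, h⟩ h1
      rw [ei, ej]
      exact hAG _ _ (cP (i : ℕ) h1)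
    · by_cases h2 : (i : ℕ) + 1 = p
      · have ei : f i = LQ[0]'(by omega) := by
          have e0 : f i = LP[(i : ℕ)]'(by omega) := hfP i (by omega)
          rw [e0, geP (i : ℕ) (p - 1) (by omega) (by omega) (by omega),
            hPlast (by omega), ← hQ0 (by omega)]
        have ej : f ⟨(i : ℕ) + 1, h⟩ = LQ[1]'(by omega) := by
          have e0 : f ⟨(i : ℕ) + 1, h⟩ = LQ[(i : ℕ) + 1 - p + 1]'(by omega) :=
            hfQ ⟨(i : ℕ) + 1, h⟩ (by show ¬ (i : ℕ) + 1 < p; omega)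
          rw [e0]
          exact geQ _ _ (by omega) (by omega) (by omega)
        rw [ei, ej]
        exact hBG _ _ (cQ 0 (by omega))
      · have ei : f i = LQ[(i : ℕ) - p + 1]'(by omega) := hfQ i (by omega)
        have ej : f ⟨(i : ℕ) + 1, h⟩ = LQ[(i : ℕ) - p + 1 + 1]'(by omega) := by
          have e0 : f ⟨(i : ℕ) + 1, h⟩ = LQ[(i : ℕ) + 1 - p + 1]'(by omega) :=
            hfQ ⟨(i : ℕ) + 1, h⟩ (by show ¬ (i : ℕ) + 1 < p; omega)
          rw [e0]
          exact geQ _ _ (by omega) (by omega) (by omega)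
        rw [ei, ej]
        exact hBG _ _ (cQ ((i : ℕ) - p + 1) (by omega))
  have claimw : G.Adj (f ⟨n - 1, by omega⟩) (f ⟨0, by omega⟩) := by
    have ei : f ⟨n - 1, by omega⟩ = LQ[q - 2]'(by omega) := by
      have e0 : f ⟨n - 1, by omega⟩ = LQ[n - 1 - p + 1]'(by omega) :=
        hfQ ⟨n - 1, by omega⟩ (by show ¬ n - 1 < p; omega)
      rw [e0]
      exact geQ _ _ (by omega) (by omega) (by omega)
    have ej : f ⟨0, by omega⟩ = LQ[q - 1]'(by omega) := by
      have e0 : f ⟨0, by omega⟩ = LP[0]'(by omega) := hfP ⟨0, by omega⟩ (by show (0:ℕ) < p; omega)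
      rw [e0, hP0 (by omega), ← hQlast (by omega)]
    rw [ei, ej]
    have e1 : LQ[q - 1]'(by omega) = LQ[q - 2 + 1]'(by omega) :=
      geQ _ _ (by omega) (by omega) (by omega)
    rw [e1]
    exact hBG _ _ (cQ (q - 2) (by omega))
  -- the chord analysis
  have claimPQ : ∀ (i j : Fin n), (i : ℕ) < p → ¬ (j : ℕ) < p → G.Adj (f i) (f j) →
      ((j : ℕ) = ((i : ℕ) + 1) % n ∨ (i : ℕ) = ((j : ℕ) + 1) % n) := by
    intro i j hi hj hadj
    have hjlt := j.isLt
    have hjq : (j : ℕ) - p + 1 < q := by omega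
    have ej : f j = LQ[(j : ℕ) - p + 1]'hjq := hfQ j hj
    have hjB : LQ[(j : ℕ) - p + 1]'hjq ∈ B := hQint _ hjq (by omega) (by omega)
    rw [hfP i hi, ej] at hadj
    by_cases hi0 : (i : ℕ) = 0
    · have ex : LP[(i : ℕ)]'hi = LQ[q - 1]'(by omega) := by
        rw [geP (i : ℕ) 0 hi (by omega) hi0, hP0 (by omega), ← hQlast (by omega)]
      rw [ex] at hadj
      have hadjB : HB.Adj (LQ[q - 1]'(by omega)) (LQ[(j : ℕ) - p + 1]'hjq) :=
        hGB _ _ (hQmem _ (by omega)) (hQmem _ hjq) hadj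
      rcases lt_trichotomy ((j : ℕ) - p + 1 + 1) (q - 1) with hc | hc | hc
      · exact absurd hadjB.symm (hQind _ (q - 1) hjq (by omega) hc)
      · right
        have hj1 : (j : ℕ) + 1 = n := by omega
        rw [hj1, Nat.mod_self]
        exact hi0
      · omega
    · by_cases hip : (i : ℕ) = p - 1
      · have ey : LP[(i : ℕ)]'hi = LQ[0]'(by omega) := by
          rw [geP (i : ℕ) (p - 1) hi (by omega) hip, hPlast (by omega), ← hQ0 (by omega)]
        rw [ey] at hadj
        have hadjB : HB.Adj (LQ[0]'(by omega)) (LQ[(j : ℕ) - p + 1]'hjq) :=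
          hGB _ _ (hQmem _ (by omega)) (hQmem _ hjq) hadj
        rcases lt_trichotomy (0 + 1) ((j : ℕ) - p + 1) with hc | hc | hc
        · exact absurd hadjB (hQind 0 _ (by omega) hjq (by omega))
        · left
          rw [Nat.mod_eq_of_lt (by omega : (i : ℕ) + 1 < n)]
          omega
        · omega
      · have hiA : LP[(i : ℕ)]'hi ∈ A := hPint (i : ℕ) hi (by omega) (by omega)
        exact absurd hadj (hAB _ hiA _ hjB).2
  have claim2 : ∀ (i j : Fin n), G.Adj (f i) (f j) →
      ((j : ℕ) = ((i : ℕ) + 1) % n ∨ (i : ℕ) = ((j : ℕ) + 1) % n) := by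
    intro i j hadj
    have hilt := i.isLt
    have hjlt := j.isLt
    have hne : (i : ℕ) ≠ (j : ℕ) := by
      intro hh
      have : i = j := Fin.ext hh
      rw [this] at hadj
      exact G.loopless.irrefl _ hadj
    by_cases hi : (i : ℕ) < p <;> by_cases hj : (j : ℕ) < p
    · rw [hfP i hi, hfP j hj] at hadj
      have hadjA : HA.Adj (LP[(i : ℕ)]'hi) (LP[(j : ℕ)]'hj) :=
        hGA _ _ (hPmem _ hi) (hPmem _ hj) hadj
      rcases lt_trichotomy (i : ℕ) (j : ℕ) with hc | hc | hc
      · rcases lt_or_eq_of_le (by omega : (i : ℕ) + 1 ≤ (j : ℕ)) with hc' | hc'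
        · exact absurd hadjA (hPind _ _ hi hj hc')
        · left
          rw [Nat.mod_eq_of_lt (by omega : (i : ℕ) + 1 < n)]
          omega
      · omega
      · rcases lt_or_eq_of_le (by omega : (j : ℕ) + 1 ≤ (i : ℕ)) with hc' | hc'
        · exact absurd hadjA.symm (hPind _ _ hj hi hc')
        · right
          rw [Nat.mod_eq_of_lt (by omega : (j : ℕ) + 1 < n)]
          omega
    · exact claimPQ i j hi hj hadj
    · exact (claimPQ j i hj hi hadj.symm).symm
    · rw [hfQ i hi, hfQ j hj] at hadj
      have hadjB : HB.Adj (LQ[(i : ℕ) - p + 1]'(by omega)) (LQ[(j : ℕ) - p + 1]'(by omega)) :=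
        hGB _ _ (hQmem _ (by omega)) (hQmem _ (by omega)) hadj
      rcases lt_trichotomy (i : ℕ) (j : ℕ) with hc | hc | hc
      · rcases lt_or_eq_of_le (by omega : (i : ℕ) + 1 ≤ (j : ℕ)) with hc' | hc'
        · exact absurd hadjB (hQind _ _ (by omega) (by omega) (by omega))
        · left
          rw [Nat.mod_eq_of_lt (by omega : (i : ℕ) + 1 < n)]
          omega
      · omega
      · rcases lt_or_eq_of_le (by omega : (j : ℕ) + 1 ≤ (i : ℕ)) with hc' | hc'
        · exact absurd hadjB.symm (hQind _ _ (by omega) (by omega) (by omega))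
        · right
          rw [Nat.mod_eq_of_lt (by omega : (j : ℕ) + 1 < n)]
          omega
  have hfeq : ∀ (i j : Fin n), (i : ℕ) = (j : ℕ) → f i = f j :=
    fun i j h => congrArg f (Fin.ext h)
  refine chordal_no_cycle hch hn4 f hinj ?_
  intro i j
  constructor
  · exact claim2 i j
  · intro hcons
    have hilt := i.isLt
    have hjlt := j.isLt
    rcases hcons with hc | hc
    · by_cases h1 : (i : ℕ) + 1 < n
      · rw [hfeq j ⟨(i : ℕ) + 1, h1⟩ (by rw [hc]; exact Nat.mod_eq_of_lt h1)]
        exact claim1 i h1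
      · have hi' : (i : ℕ) = n - 1 := by omega
        have hj' : (j : ℕ) = 0 := by
          rw [hc]
          have e : (i : ℕ) + 1 = n := by omega
          rw [e, Nat.mod_self]
        rw [hfeq i ⟨n - 1, by omega⟩ hi', hfeq j ⟨0, by omega⟩ hj']
        exact claimw
    · by_cases h1 : (j : ℕ) + 1 < n
      · rw [hfeq i ⟨(j : ℕ) + 1, h1⟩ (by rw [hc]; exact Nat.mod_eq_of_lt h1)]
        exact (claim1 j h1).symm
      · have hj' : (j : ℕ) = n - 1 := by omega
        have hi' : (i : ℕ) = 0 := by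
          rw [hc]
          have e : (j : ℕ) + 1 = n := by omega
          rw [e, Nat.mod_self]
        rw [hfeq j ⟨n - 1, by omega⟩ hj', hfeq i ⟨0, by omega⟩ hi']
        exact claimw.symm
end B

section C
variable {G : SimpleGraph V}

/-- `v` is simplicial within `s`. -/
def SimpIn (G : SimpleGraph V) (s : Finset V) (v : V) : Prop :=
  v ∈ s ∧ ∀ x ∈ s, ∀ y ∈ s, G.Adj v x → G.Adj v y → x = y ∨ G.Adj x y

def GoodPair (G : SimpleGraph V) (s : Finset V) : Prop :=
  (∀ x ∈ s, ∀ y ∈ s, x ≠ y → G.Adj x y) ∨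
    ∃ a ∈ s, ∃ b ∈ s, a ≠ b ∧ ¬ G.Adj a b ∧ SimpIn G s a ∧ SimpIn G s b

lemma sep_neighbor {s S : Finset V} {a b : V}
    (ha : a ∈ s) (hb : b ∈ s) (hne : a ≠ b)
    (hSs : S ⊆ s) (haS : a ∉ S) (hbS : b ∉ S)
    (hsep : ¬ (Grestrict G (↑s \ ↑S)).Reachable a b)
    (hmin : ∀ S' : Finset V, S' ⊆ s → a ∉ S' → b ∉ S' →
      ¬ (Grestrict G (↑s \ ↑S')).Reachable a b → S.card ≤ S'.card) :
    ∀ x ∈ S, ∃ u, u ∈ (↑s \ ↑S : Set V) ∧ (Grestrict G (↑s \ ↑S)).Reachable a u ∧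
      G.Adj x u := by
  intro x hxS
  set S' := S.erase x with hS'
  have hS'card : S'.card < S.card := Finset.card_erase_lt_of_mem hxS
  have hxa : x ≠ a := fun h => haS (h ▸ hxS)
  have hreach : (Grestrict G (↑s \ ↑S')).Reachable a b := by
    by_contra hcon
    have := hmin S' ((Finset.erase_subset _ _).trans hSs)
      (fun h => haS (Finset.mem_of_mem_erase h)) (fun h => hbS (Finset.mem_of_mem_erase h)) hcon
    omega
  obtain ⟨pw⟩ := hreach
  have hadj_trans : ∀ u v, (Grestrict G (↑s \ ↑S')).Adj u v → u ≠ x → v ≠ x →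
      (Grestrict G (↑s \ ↑S)).Adj u v := by
    intro u v huv hu hv
    rw [Grestrict_adj] at huv ⊢
    obtain ⟨h1, h2, h3⟩ := huv
    rw [Set.mem_diff] at h1 h2
    refine ⟨⟨h1.1, ?_⟩, ⟨h2.1, ?_⟩, h3⟩
    · intro hmem
      exact h1.2 (Finset.mem_coe.2 (Finset.mem_erase.2 ⟨hu, Finset.mem_coe.1 hmem⟩))
    · intro hmem
      exact h2.2 (Finset.mem_coe.2 (Finset.mem_erase.2 ⟨hv, Finset.mem_coe.1 hmem⟩))
  by_cases hx : x ∈ pw.support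
  · set q := pw.takeUntil x hx with hqdef
    have hcount : q.support.count x = 1 := pw.count_support_takeUntil_eq_one hx
    cases hqr : q.reverse with
    | nil => exact absurd hxS haS
    | cons hadj0 r =>
      rename_i z
      have hsupp : q.reverse.support = x :: r.support := by rw [hqr, Walk.support_cons]
      have hcount2 : (x :: r.support).count x = 1 := by
        rw [← hsupp, Walk.support_reverse, List.count_reverse, hcount]
      have hxnotr : x ∉ r.support := by
        rw [List.count_cons_self] at hcount2
        exact List.count_eq_zero.1 (by omega)
      have hzr : z ∈ r.support := r.start_mem_support
      have hzx : z ≠ x := fun h => hxnotr (h ▸ hzr)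
      have hreachza : (Grestrict G (↑s \ ↑S)).Reachable z a :=
        reachable_transfer r (fun u v huv hu hv =>
          hadj_trans u v huv (fun e => hxnotr (e ▸ hu)) (fun e => hxnotr (e ▸ hv)))
      have hadj0' := Grestrict_adj.1 hadj0
      have hzmem : z ∈ (↑s \ ↑S : Set V) := by
        have h2 := hadj0'.2.1
        rw [Set.mem_diff] at h2 ⊢
        refine ⟨h2.1, ?_⟩
        intro hmem
        exact h2.2 (Finset.mem_coe.2 (Finset.mem_erase.2 ⟨hzx, Finset.mem_coe.1 hmem⟩))
      exact ⟨z, hzmem, hreachza.symm, hadj0'.2.2⟩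
  · have : (Grestrict G (↑s \ ↑S)).Reachable a b :=
      reachable_transfer pw (fun u v huv hu hv =>
        hadj_trans u v huv (fun e => hx (e ▸ hu)) (fun e => hx (e ▸ hv)))
    exact absurd this hsep

lemma sep_clique (hch : IsChordal G) {s S : Finset V} {a b : V}
    (ha : a ∈ s) (hb : b ∈ s) (hne : a ≠ b)
    (hSs : S ⊆ s) (haS : a ∉ S) (hbS : b ∉ S)
    (hsep : ¬ (Grestrict G (↑s \ ↑S)).Reachable a b)
    (hmin : ∀ S' : Finset V, S' ⊆ s → a ∉ S' → b ∉ S' →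
      ¬ (Grestrict G (↑s \ ↑S')).Reachable a b → S.card ≤ S'.card) :
    ∀ x ∈ S, ∀ y ∈ S, x ≠ y → G.Adj x y := by
  intro x hxS y hyS hxy
  by_contra hnadj
  set H := Grestrict G (↑s \ ↑S) with hH
  set A : Set V := {z | z ∈ (↑s \ ↑S : Set V) ∧ H.Reachable a z} with hA
  set B : Set V := {z | z ∈ (↑s \ ↑S : Set V) ∧ H.Reachable b z} with hB
  have hamem : a ∈ (↑s \ ↑S : Set V) := by
    rw [Set.mem_diff]; exact ⟨Finset.mem_coe.2 ha, fun h => haS (Finset.mem_coe.1 h)⟩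
  have hbmem : b ∈ (↑s \ ↑S : Set V) := by
    rw [Set.mem_diff]; exact ⟨Finset.mem_coe.2 hb, fun h => hbS (Finset.mem_coe.1 h)⟩
  have hsepb : ¬ H.Reachable b a := fun r => hsep r.symm
  have hminb : ∀ S' : Finset V, S' ⊆ s → b ∉ S' → a ∉ S' →
      ¬ (Grestrict G (↑s \ ↑S')).Reachable b a → S.card ≤ S'.card :=
    fun S' h1 h2 h3 h4 => hmin S' h1 h3 h2 (fun r => h4 r.symm)
  -- no edges / equalities between A and B
  have hAB : ∀ u ∈ A, ∀ v ∈ B, u ≠ v ∧ ¬ G.Adj u v := by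
    intro u hu v hv
    constructor
    · intro h
      exact hsep (hu.2.trans (h ▸ hv.2).symm)
    · intro hadj
      have : H.Adj u v := Grestrict_adj.2 ⟨hu.1, hv.1, hadj⟩
      exact hsep ((hu.2.trans this.reachable).trans hv.2.symm)
  have hxA : x ∉ A := fun h => h.1.2 (Finset.mem_coe.2 hxS)
  have hyA : y ∉ A := fun h => h.1.2 (Finset.mem_coe.2 hyS)
  have hxB : x ∉ B := fun h => h.1.2 (Finset.mem_coe.2 hxS)
  have hyB : y ∉ B := fun h => h.1.2 (Finset.mem_coe.2 hyS)
  -- reachability within a component stays within the side graphs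
  have reachA : ∀ u v, u ∈ A → v ∈ A → (Grestrict G ({x, y} ∪ A)).Reachable u v := by
    intro u v hu hv
    obtain ⟨pw⟩ := hu.2.symm.trans hv.2
    refine reachable_transfer pw (fun c d hcd hc hd => ?_)
    have hcr : H.Reachable u c := ⟨pw.takeUntil c hc⟩
    have hdr : H.Reachable u d := ⟨pw.takeUntil d hd⟩
    have hcd' := Grestrict_adj.1 hcd
    refine Grestrict_adj.2 ⟨Or.inr ⟨hcd'.1, hu.2.trans hcr⟩,
      Or.inr ⟨hcd'.2.1, hu.2.trans hdr⟩, hcd'.2.2⟩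
  have reachB : ∀ u v, u ∈ B → v ∈ B → (Grestrict G ({x, y} ∪ B)).Reachable u v := by
    intro u v hu hv
    obtain ⟨pw⟩ := hu.2.symm.trans hv.2
    refine reachable_transfer pw (fun c d hcd hc hd => ?_)
    have hcr : H.Reachable u c := ⟨pw.takeUntil c hc⟩
    have hdr : H.Reachable u d := ⟨pw.takeUntil d hd⟩
    have hcd' := Grestrict_adj.1 hcd
    refine Grestrict_adj.2 ⟨Or.inr ⟨hcd'.1, hu.2.trans hcr⟩,
      Or.inr ⟨hcd'.2.1, hu.2.trans hdr⟩, hcd'.2.2⟩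
  -- neighbors of x and y in A
  obtain ⟨ux, hux1, hux2, hux3⟩ := sep_neighbor ha hb hne hSs haS hbS hsep hmin x hxS
  obtain ⟨uy, huy1, huy2, huy3⟩ := sep_neighbor ha hb hne hSs haS hbS hsep hmin y hyS
  obtain ⟨vx, hvx1, hvx2, hvx3⟩ := sep_neighbor hb ha hne.symm hSs hbS haS hsepb hminb x hxS
  obtain ⟨vy, hvy1, hvy2, hvy3⟩ := sep_neighbor hb ha hne.symm hSs hbS haS hsepb hminb y hyS
  have huxA : ux ∈ A := ⟨hux1, hux2⟩
  have huyA : uy ∈ A := ⟨huy1, huy2⟩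
  have hvxB : vx ∈ B := ⟨hvx1, hvx2⟩
  have hvyB : vy ∈ B := ⟨hvy1, hvy2⟩
  have hrA : (Grestrict G ({x, y} ∪ A)).Reachable x y := by
    have e1 : (Grestrict G ({x, y} ∪ A)).Adj x ux :=
      Grestrict_adj.2 ⟨Or.inl (Or.inl rfl), Or.inr huxA, hux3⟩
    have e2 : (Grestrict G ({x, y} ∪ A)).Adj uy y :=
      Grestrict_adj.2 ⟨Or.inr huyA, Or.inl (Or.inr rfl), huy3.symm⟩
    exact (e1.reachable.trans (reachA ux uy huxA huyA)).trans e2.reachable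
  have hrB : (Grestrict G ({x, y} ∪ B)).Reachable x y := by
    have e1 : (Grestrict G ({x, y} ∪ B)).Adj x vx :=
      Grestrict_adj.2 ⟨Or.inl (Or.inl rfl), Or.inr hvxB, hvx3⟩
    have e2 : (Grestrict G ({x, y} ∪ B)).Adj vy y :=
      Grestrict_adj.2 ⟨Or.inr hvyB, Or.inl (Or.inr rfl), hvy3.symm⟩
    exact (e1.reachable.trans (reachB vx vy hvxB hvyB)).trans e2.reachable
  exact hnadj (clique_of_sep hch hxy hAB hxA hyA hxB hyB hrA hrB)

lemma dirac_side (hch : IsChordal G) {s : Finset V}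
    (IH : ∀ t : Finset V, t ⊂ s → GoodPair G t)
    {a b : V} (ha : a ∈ s) (hb : b ∈ s) (hne : a ≠ b) (hnadj : ¬ G.Adj a b)
    {S : Finset V} (hSs : S ⊆ s) (haS : a ∉ S) (hbS : b ∉ S)
    (hsep : ¬ (Grestrict G (↑s \ ↑S)).Reachable a b)
    (hmin : ∀ S' : Finset V, S' ⊆ s → a ∉ S' → b ∉ S' →
      ¬ (Grestrict G (↑s \ ↑S')).Reachable a b → S.card ≤ S'.card)
    (hclique : ∀ x ∈ S, ∀ y ∈ S, x ≠ y → G.Adj x y) :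
    ∃ v, v ∈ s ∧ (Grestrict G (↑s \ ↑S)).Reachable a v ∧ SimpIn G s v := by
  set H := Grestrict G (↑s \ ↑S) with hH
  have hamem : a ∈ (↑s \ ↑S : Set V) := by
    rw [Set.mem_diff]; exact ⟨Finset.mem_coe.2 ha, fun h => haS (Finset.mem_coe.1 h)⟩
  set sA : Finset V := S ∪ s.filter (fun z => H.Reachable a z) with hsA
  have hsAs : sA ⊆ s := by
    intro z hz
    rcases Finset.mem_union.1 hz with h | h
    · exact hSs h
    · exact (Finset.mem_filter.1 h).1
  have hbsA : b ∉ sA := by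
    intro h
    rcases Finset.mem_union.1 h with h | h
    · exact hbS h
    · exact hsep (Finset.mem_filter.1 h).2
  have hssub : sA ⊂ s := ⟨hsAs, fun h => hbsA (h hb)⟩
  have hasA : a ∈ sA := Finset.mem_union.2 (Or.inr (Finset.mem_filter.2 ⟨ha, Reachable.refl a⟩))
  -- membership in s \ S for reachable vertices
  have hmemdiff : ∀ v, H.Reachable a v → v ∈ (↑s \ ↑S : Set V) := by
    intro v hv
    exact restrict_reachable_mem (G := G) hv hamem
  -- neighbors of reachable vertices stay in sA
  have hnbr : ∀ v, H.Reachable a v → ∀ w ∈ s, G.Adj v w → w ∈ sA := by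
    intro v hv w hw hadj
    by_cases hwS : w ∈ S
    · exact Finset.mem_union.2 (Or.inl hwS)
    · have hvmem := hmemdiff v hv
      have hwmem : w ∈ (↑s \ ↑S : Set V) := by
        rw [Set.mem_diff]
        exact ⟨Finset.mem_coe.2 hw, fun h => hwS (Finset.mem_coe.1 h)⟩
      have : H.Adj v w := Grestrict_adj.2 ⟨hvmem, hwmem, hadj⟩
      exact Finset.mem_union.2 (Or.inr (Finset.mem_filter.2 ⟨hw, hv.trans this.reachable⟩))
  have key : ∀ v, v ∈ s → H.Reachable a v → SimpIn G sA v → SimpIn G s v := by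
    intro v hvs hvreach hsimp
    refine ⟨hvs, fun x hx y hy hvx hvy => ?_⟩
    exact hsimp.2 x (hnbr v hvreach x hx hvx) y (hnbr v hvreach y hy hvy) hvx hvy
  rcases IH sA hssub with hcomp | ⟨u, hu, u', hu', hneu, hnadju, hsu, hsu'⟩
  · refine ⟨a, ha, Reachable.refl a, key a ha (Reachable.refl a) ?_⟩
    refine ⟨hasA, fun x hx y hy hax hay => ?_⟩
    by_cases hxy : x = y
    · exact Or.inl hxy
    · exact Or.inr (hcomp x hx y hy hxy)
  · -- not both of u, u' lie in S
    have hone : (u ∈ s ∧ H.Reachable a u) ∨ (u' ∈ s ∧ H.Reachable a u') := by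
      rcases Finset.mem_union.1 hu with h1 | h1
      · rcases Finset.mem_union.1 hu' with h2 | h2
        · exact absurd (hclique u h1 u' h2 hneu) hnadju
        · have := Finset.mem_filter.1 h2
          exact Or.inr ⟨this.1, this.2⟩
      · have := Finset.mem_filter.1 h1
        exact Or.inl ⟨this.1, this.2⟩
    rcases hone with ⟨h1, h2⟩ | ⟨h1, h2⟩
    · exact ⟨u, h1, h2, key u h1 h2 hsu⟩
    · exact ⟨u', h1, h2, key u' h1 h2 hsu'⟩

lemma dirac (hch : IsChordal G) (s : Finset V) : GoodPair G s := by
  induction s using Finset.strongInductionOn with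
  | _ s IH =>
  by_cases hcomp : ∀ x ∈ s, ∀ y ∈ s, x ≠ y → G.Adj x y
  · exact Or.inl hcomp
  · push_neg at hcomp
    obtain ⟨a, ha, b, hb, hne, hnadj⟩ := hcomp
    -- the set of separators is nonempty
    set P : Finset V → Prop := fun S => S ⊆ s ∧ a ∉ S ∧ b ∉ S ∧
      ¬ (Grestrict G (↑s \ ↑S)).Reachable a b with hP
    have hP0 : P ((s.erase a).erase b) := by
      refine ⟨(Finset.erase_subset _ _).trans (Finset.erase_subset _ _), ?_, ?_, ?_⟩
      · intro h
        exact (Finset.mem_erase.1 (Finset.mem_of_mem_erase h)).1 rfl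
      · intro h
        exact (Finset.mem_erase.1 h).1 rfl
      · intro hreach
        obtain ⟨pw⟩ := hreach
        cases pw with
        | nil => exact hne rfl
        | cons hadj0 r =>
          rename_i z
          have h1 := Grestrict_adj.1 hadj0
          have hz : z ∈ (↑s \ ↑((s.erase a).erase b) : Set V) := h1.2.1
          rw [Set.mem_diff] at hz
          have hzs : z ∈ s := Finset.mem_coe.1 hz.1
          have : z = a ∨ z = b := by
            by_contra hcon
            push_neg at hcon
            exact hz.2 (Finset.mem_coe.2 (Finset.mem_erase.2 ⟨hcon.2,
              Finset.mem_erase.2 ⟨hcon.1, hzs⟩⟩))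
          rcases this with rfl | rfl
          · exact G.loopless.irrefl _ h1.2.2
          · exact hnadj h1.2.2
    have hTne : (Finset.univ.powerset.filter P).Nonempty :=
      ⟨(s.erase a).erase b, Finset.mem_filter.2
        ⟨Finset.mem_powerset.2 (Finset.subset_univ _), hP0⟩⟩
    obtain ⟨S, hSmem, hSmin⟩ := Finset.exists_min_image _ Finset.card hTne
    have hS : P S := (Finset.mem_filter.1 hSmem).2
    obtain ⟨hSs, haS, hbS, hsep⟩ := hS
    have hmin : ∀ S' : Finset V, S' ⊆ s → a ∉ S' → b ∉ S' →
        ¬ (Grestrict G (↑s \ ↑S')).Reachable a b → S.card ≤ S'.card :=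
      fun S' h1 h2 h3 h4 => hSmin S' (Finset.mem_filter.2
        ⟨Finset.mem_powerset.2 (Finset.subset_univ _), h1, h2, h3, h4⟩)
    have hclique := sep_clique hch ha hb hne hSs haS hbS hsep hmin
    obtain ⟨vA, hvAs, hvAr, hvAsimp⟩ :=
      dirac_side hch IH ha hb hne hnadj hSs haS hbS hsep hmin hclique
    have hsepb : ¬ (Grestrict G (↑s \ ↑S)).Reachable b a := fun r => hsep r.symm
    have hminb : ∀ S' : Finset V, S' ⊆ s → b ∉ S' → a ∉ S' →
        ¬ (Grestrict G (↑s \ ↑S')).Reachable b a → S.card ≤ S'.card :=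
      fun S' h1 h2 h3 h4 => hmin S' h1 h3 h2 (fun r => h4 r.symm)
    obtain ⟨vB, hvBs, hvBr, hvBsimp⟩ :=
      dirac_side hch IH hb ha hne.symm (fun h => hnadj h.symm) hSs hbS haS hsepb hminb hclique
    have hamem : a ∈ (↑s \ ↑S : Set V) := by
      rw [Set.mem_diff]; exact ⟨Finset.mem_coe.2 ha, fun h => haS (Finset.mem_coe.1 h)⟩
    have hbmem : b ∈ (↑s \ ↑S : Set V) := by
      rw [Set.mem_diff]; exact ⟨Finset.mem_coe.2 hb, fun h => hbS (Finset.mem_coe.1 h)⟩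
    have hvAmem : vA ∈ (↑s \ ↑S : Set V) := restrict_reachable_mem (G := G) hvAr hamem
    have hvBmem : vB ∈ (↑s \ ↑S : Set V) := restrict_reachable_mem (G := G) hvBr hbmem
    have hneAB : vA ≠ vB := by
      intro h
      exact hsep (hvAr.trans (h ▸ hvBr).symm)
    have hnadjAB : ¬ G.Adj vA vB := by
      intro hadj
      have : (Grestrict G (↑s \ ↑S)).Adj vA vB := Grestrict_adj.2 ⟨hvAmem, hvBmem, hadj⟩
      exact hsep ((hvAr.trans this.reachable).trans hvBr.symm)
    exact Or.inr ⟨vA, hvAs, vB, hvBs, hneAB, hnadjAB, hvAsimp, hvBsimp⟩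

lemma exists_simp (hch : IsChordal G) {s : Finset V} (hs : s.Nonempty) :
    ∃ v, SimpIn G s v := by
  rcases dirac hch s with hcomp | ⟨a, _, b, _, _, _, hsa, _⟩
  · obtain ⟨v, hv⟩ := hs
    refine ⟨v, hv, fun x hx y hy hvx hvy => ?_⟩
    by_cases h : x = y
    · exact Or.inl h
    · exact Or.inr (hcomp x hx y hy h)
  · exact ⟨a, hsa⟩

/-- The maximal cliques within `s`. -/
noncomputable def MCin (G : SimpleGraph V) (s : Finset V) : Finset (Finset V) :=
  s.powerset.filter (fun K => K.Nonempty ∧ (∀ x ∈ K, ∀ y ∈ K, x ≠ y → G.Adj x y) ∧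
    ∀ K' : Finset V, K' ⊆ s → (∀ x ∈ K', ∀ y ∈ K', x ≠ y → G.Adj x y) → K ⊆ K' → K = K')

lemma MCin_card (hch : IsChordal G) : ∀ s : Finset V, (MCin G s).card ≤ s.card := by
  intro s
  induction s using Finset.strongInductionOn with
  | _ s IH =>
  rcases s.eq_empty_or_nonempty with rfl | hs
  · have : MCin G ∅ = ∅ := by
      rw [Finset.eq_empty_iff_forall_notMem]
      intro K hK
      obtain ⟨hKs, hKne, -⟩ := Finset.mem_filter.1 hK
      rw [Finset.mem_powerset, Finset.subset_empty] at hKs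
      subst hKs
      exact Finset.not_nonempty_empty hKne
    simp [this]
  · obtain ⟨v, hvsimp⟩ := exists_simp hch hs
    obtain ⟨hvs, hsimp⟩ := hvsimp
    set N : Finset V := s.filter (fun w => G.Adj v w) with hN
    set Kv : Finset V := insert v N with hKv
    have hKvs : Kv ⊆ s := by
      intro w hw
      rcases Finset.mem_insert.1 hw with rfl | hw'
      · exact hvs
      · exact (Finset.mem_filter.1 hw').1
    have hKvclique : ∀ x ∈ Kv, ∀ y ∈ Kv, x ≠ y → G.Adj x y := by
      intro x hx y hy hxy
      rcases Finset.mem_insert.1 hx with rfl | hx' <;> rcases Finset.mem_insert.1 hy with rfl | hy'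
      · exact absurd rfl hxy
      · exact (Finset.mem_filter.1 hy').2
      · exact (Finset.mem_filter.1 hx').2.symm
      · have h1 := Finset.mem_filter.1 hx'
        have h2 := Finset.mem_filter.1 hy'
        rcases hsimp x h1.1 y h2.1 h1.2 h2.2 with h | h
        · exact absurd h hxy
        · exact h
    have hunique : ∀ K ∈ MCin G s, v ∈ K → K = Kv := by
      intro K hK hvK
      obtain ⟨hKs, hKne, hKcl, hKmax⟩ := Finset.mem_filter.1 hK
      rw [Finset.mem_powerset] at hKs
      refine hKmax Kv hKvs hKvclique ?_
      intro w hw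
      by_cases hwv : w = v
      · subst hwv; exact Finset.mem_insert_self _ _
      · refine Finset.mem_insert_of_mem (Finset.mem_filter.2 ⟨hKs hw, ?_⟩)
        exact hKcl v hvK w hw (fun h => hwv h.symm)
    have hmap : ∀ K ∈ MCin G s, v ∉ K → K ∈ MCin G (s.erase v) := by
      intro K hK hvK
      obtain ⟨hKs, hKne, hKcl, hKmax⟩ := Finset.mem_filter.1 hK
      rw [Finset.mem_powerset] at hKs
      refine Finset.mem_filter.2 ⟨Finset.mem_powerset.2 ?_, hKne, hKcl, ?_⟩
      · intro w hw
        exact Finset.mem_erase.2 ⟨fun h => hvK (h ▸ hw), hKs hw⟩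
      · intro K' hK's hK'cl hsub
        exact hKmax K' (hK's.trans (Finset.erase_subset _ _)) hK'cl hsub
    have hsub : MCin G s ⊆ insert Kv (MCin G (s.erase v)) := by
      intro K hK
      by_cases h : v ∈ K
      · rw [hunique K hK h]; exact Finset.mem_insert_self _ _
      · exact Finset.mem_insert_of_mem (hmap K hK h)
    have hcard1 := Finset.card_le_card hsub
    have hcard2 := Finset.card_insert_le Kv (MCin G (s.erase v))
    have hcard3 := IH (s.erase v) (Finset.erase_ssubset hvs)
    have hcard4 : (s.erase v).card = s.card - 1 := Finset.card_erase_of_mem hvs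
    have hcard5 : 1 ≤ s.card := Finset.card_pos.2 hs
    omega
end C

/-- every chordal graph on `n` vertices has at most `n` maximal cliques. -/
theorem stmt1 [Nonempty V] (G : SimpleGraph V) (hch : IsChordal G) :
    Fintype.card (CV G) ≤ Fintype.card V := by
  classical
  have h1 : Fintype.card (CV G) =
      (Finset.univ.filter (fun K : Finset V => MaxClique G K)).card :=
    Fintype.card_subtype _
  have h2 : Finset.univ.filter (fun K : Finset V => MaxClique G K) ⊆ MCin G Finset.univ := by
    intro K hK
    obtain ⟨hcl, hmax⟩ := (Finset.mem_filter.1 hK).2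
    refine Finset.mem_filter.2 ⟨Finset.mem_powerset.2 (Finset.subset_univ _), ?_, ?_, ?_⟩
    · rcases K.eq_empty_or_nonempty with rfl | h
      · exfalso
        obtain ⟨v⟩ := ‹Nonempty V›
        have hcl' : G.IsClique ((({v} : Finset V) : Set V)) := by
          simp [SimpleGraph.isClique_iff]
        have heq := hmax {v} hcl' (Finset.empty_subset _)
        exact Finset.singleton_ne_empty v heq.symm
      · exact h
    · intro x hx y hy hne
      exact hcl (Finset.mem_coe.2 hx) (Finset.mem_coe.2 hy) hne
    · intro K' hK's hK'cl hsub
      refine hmax K' ?_ hsub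
      intro x hx y hy hne
      exact hK'cl x (Finset.mem_coe.1 hx) y (Finset.mem_coe.1 hy) hne
  rw [h1]
  have hle := Finset.card_le_card h2
  have h3 := MCin_card hch Finset.univ
  rw [Finset.card_univ] at h3
  omega
end

section
/- Let G be a connected chordal graph with layer structure rooted at a maximal clique K*. If UU' is an edge of the layer structure with label S, then every path between U and U' in the layer structure contains at least one edge with label S. -/
open SimpleGraph

attribute [local instance] Classical.propDecidable
set_option linter.unusedSectionVars false

variable {V : Type*} [Fintype V] [DecidableEq V]

private lemma walk_const_of_adj {W : Type*} {β : Sort*} {H : SimpleGraph W} (f : W → β)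
    (hf : ∀ a b, H.Adj a b → f a = f b) :
    ∀ {a b : W}, H.Walk a b → f a = f b := by
  intro a b q
  induction q with
  | nil => rfl
  | cons h _ ih => exact (hf _ _ h).trans ih

private lemma support_prop_of_adj {W : Type*} {H : SimpleGraph W} {P : W → Prop}
    (hH : ∀ a b, H.Adj a b → P b) :
    ∀ {a b : W} (q : H.Walk a b), P a → ∀ x ∈ q.support, P x := by
  intro a b q
  induction q with
  | nil =>
    intro ha x hx
    simp only [SimpleGraph.Walk.support_nil, List.mem_singleton] at hx
    subst hx; exact ha
  | cons h q ih =>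
    intro ha x hx
    rw [SimpleGraph.Walk.support_cons] at hx
    rcases List.mem_cons.mp hx with rfl | hx
    · exact ha
    · exact ih (hH _ _ h) x hx

private lemma exists_diff_edge {W : Type*} {β : Sort*} {H : SimpleGraph W} (f : W → β) :
    ∀ {u v : W} (p : H.Walk u v), f u ≠ f v →
      ∃ a b, s(a, b) ∈ p.edges ∧ f a ≠ f b := by
  intro u v p
  induction p with
  | nil => intro h; exact absurd rfl h
  | @cons u b v hadj q ih =>
    intro hne
    by_cases hub : f u = f b
    · obtain ⟨a, c, hmem, hac⟩ := ih (fun h => hne (hub.trans h))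
      exact ⟨a, c, by simp [hmem], hac⟩
    · exact ⟨u, b, by simp, hub⟩

/-- if `UU'` is an edge of the layer structure with label `S`, then every
path between `U` and `U'` in the layer structure contains an edge with label `S`. -/
theorem stmt7 (G : SimpleGraph V) (hG : G.Connected) (hch : IsChordal G)
    (w : ℕ) (hw : IsMinEdgeWeight G w) (Kstar : CV G)
    (U U' : LUnit G w) (hadj : (layerGraph G w).Adj U U')
    (S : Finset V)
    (hS : ∃ K K' : CV G, (cliqueGraph G).Adj K K' ∧ umk G w K = U ∧ umk G w K' = U' ∧
      K.1 ∩ K'.1 = S)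
    (p : (layerGraph G w).Walk U U') (hp : p.IsPath) :
    ∃ U1 U2 : LUnit G w, s(U1, U2) ∈ p.edges ∧
      ∃ K1 K2 : CV G, (cliqueGraph G).Adj K1 K2 ∧ umk G w K1 = U1 ∧ umk G w K2 = U2 ∧
        K1.1 ∩ K2.1 = S := by
    classical
  obtain ⟨K0, K0', hadj0, hU0, hU0', hlab⟩ := hS
  have hUne : U ≠ U' := hadj.1
  have hK0ne : K0 ≠ K0' := hadj0.1
  -- S has cardinality w
  have hScard : S.card = w := by
    by_contra hcard
    have : (unitGraph G w).Adj K0 K0' := ⟨hadj0, by rw [hlab]; exact hcard⟩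
    exact hUne (hU0 ▸ hU0' ▸ (SimpleGraph.ConnectedComponent.sound this.reachable))
  have hSsub : S ⊆ K0.1 := hlab ▸ Finset.inter_subset_left
  have hSsub' : S ⊆ K0'.1 := hlab ▸ Finset.inter_subset_right
  -- every maximal clique has a vertex outside S
  have hne : ∀ K : CV G, (K.1 \ S).Nonempty := by
    intro K
    rw [Finset.sdiff_nonempty]
    intro hsub
    have h1 : K.1 = K0.1 := K.2.2 K0.1 K0.2.1 (hsub.trans hSsub)
    have h2 : K0.1 ⊆ K0'.1 := h1 ▸ hsub.trans hSsub'
    exact hK0ne (Subtype.ext (K0.2.2 K0'.1 K0'.2.1 h2))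
  choose g hg using hne
  -- the graph G with S removed
  set H : SimpleGraph V := {
    Adj := fun a b => G.Adj a b ∧ a ∉ S ∧ b ∉ S
    symm := by constructor; rintro a b ⟨h, ha, hb⟩; exact ⟨h.symm, hb, ha⟩
    loopless := by constructor; rintro a ⟨h, -, -⟩; exact h.ne rfl } with hHdef
  have hHadj : ∀ a b, H.Adj a b → G.Adj a b ∧ a ∉ S ∧ b ∉ S := fun a b h => h
  -- vertices of a clique outside S are H-reachable
  have hcliq : ∀ (K : CV G), ∀ x ∈ K.1 \ S, ∀ y ∈ K.1 \ S,
      H.connectedComponentMk x = H.connectedComponentMk y := by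
    intro K x hx y hy
    rcases eq_or_ne x y with rfl | hxy
    · rfl
    · refine SimpleGraph.ConnectedComponent.sound ?_
      rw [Finset.mem_sdiff] at hx hy
      exact SimpleGraph.Adj.reachable ⟨K.2.1 hx.1 hy.1 hxy, hx.2, hy.2⟩
  set f : CV G → H.ConnectedComponent := fun K => H.connectedComponentMk (g K) with hfdef
  -- f is constant along clique-graph edges not labeled S
  have hfadj : ∀ K K' : CV G, (cliqueGraph G).Adj K K' → K.1 ∩ K'.1 ≠ S → f K = f K' := by
    intro K K' hKK hlabne
    have hwle : w ≤ (K.1 ∩ K'.1).card := hw.2 K K' hKK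
    have hnotsub : ¬ K.1 ∩ K'.1 ⊆ S := by
      intro hsub
      exact hlabne (Finset.eq_of_subset_of_card_le hsub (hScard ▸ hwle))
    obtain ⟨x, hx, hxS⟩ := Finset.not_subset.mp hnotsub
    rw [Finset.mem_inter] at hx
    have h1 := hcliq K (g K) (hg K) x (Finset.mem_sdiff.mpr ⟨hx.1, hxS⟩)
    have h2 := hcliq K' x (Finset.mem_sdiff.mpr ⟨hx.2, hxS⟩) (g K') (hg K')
    exact h1.trans h2
  -- f is constant on units
  have hfunit : ∀ K K' : CV G, umk G w K = umk G w K' → f K = f K' := by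
    intro K K' h
    have hr : (unitGraph G w).Reachable K K' := SimpleGraph.ConnectedComponent.exact h
    obtain ⟨q⟩ := hr
    exact walk_const_of_adj f
      (fun a b (hab : (unitGraph G w).Adj a b) =>
        hfadj a b hab.1 (fun he => hab.2 (he ▸ hScard))) q
  -- lift f to units
  set F : LUnit G w → H.ConnectedComponent :=
    SimpleGraph.ConnectedComponent.lift f
      (fun K K' q _ => walk_const_of_adj f
        (fun a b (hab : (unitGraph G w).Adj a b) =>
          hfadj a b hab.1 (fun he => hab.2 (he ▸ hScard))) q) with hFdef
  have hFmk : ∀ K : CV G, F (umk G w K) = f K := fun K => rfl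
  -- endpoints of the given edge: u ∈ K0 \ K0', v ∈ K0' \ K0
  obtain ⟨u, hu⟩ : (K0.1 \ K0'.1).Nonempty := by
    rw [Finset.sdiff_nonempty]
    intro hsub
    exact hK0ne (Subtype.ext (K0.2.2 K0'.1 K0'.2.1 hsub))
  obtain ⟨v, hv⟩ : (K0'.1 \ K0.1).Nonempty := by
    rw [Finset.sdiff_nonempty]
    intro hsub
    exact hK0ne (Subtype.ext (K0'.2.2 K0.1 K0.2.1 hsub).symm)
  have hsep : Separates G S u v := by
    have := (hadj0.2 u hu v hv).1
    rwa [hlab] at this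
  rw [Finset.mem_sdiff] at hu hv
  have huS : u ∉ S := fun h => hu.2 (hSsub' h)
  have hvS : v ∉ S := fun h => hv.2 (hSsub h)
  -- u and v are in different H-components
  have hdiff : H.connectedComponentMk u ≠ H.connectedComponentMk v := by
    intro h
    obtain ⟨q⟩ := SimpleGraph.ConnectedComponent.exact h
    have hle : H ≤ G := fun {a b} (hab : H.Adj a b) => hab.1
    obtain ⟨x, hxsup, hxS⟩ := hsep.2.2
      (q.transfer G (fun e he => SimpleGraph.edgeSet_mono hle (q.edges_subset_edgeSet he)))
    rw [SimpleGraph.Walk.support_transfer] at hxsup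
    exact support_prop_of_adj (fun a b (hab : H.Adj a b) => hab.2.2) q huS x hxsup hxS
  -- F differs at the endpoints of p
  have hFp : F U ≠ F U' := by
    rw [← hU0, ← hU0', hFmk, hFmk, hfdef]
    have h1 := hcliq K0 (g K0) (hg K0) u (Finset.mem_sdiff.mpr ⟨hu.1, huS⟩)
    have h2 := hcliq K0' (g K0') (hg K0') v (Finset.mem_sdiff.mpr ⟨hv.1, hvS⟩)
    simp only
    rw [h1, h2]
    exact hdiff
  obtain ⟨U1, U2, hmem, hFne⟩ := exists_diff_edge F p hFp
  have hadj12 : (layerGraph G w).Adj U1 U2 := p.adj_of_mem_edges hmem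
  obtain ⟨-, K1, K2, hK12, hK1, hK2⟩ := hadj12
  refine ⟨U1, U2, hmem, K1, K2, hK12, hK1, hK2, ?_⟩
  by_contra hlabne
  exact hFne (by rw [← hK1, ← hK2, hFmk, hFmk]; exact hfadj K1 K2 hK12 hlabne)
end
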